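/- Let D_1 ⊆ ℝ^d be a finite union of bounded convex regular-closed sets and let D_2 ⊆ ℝ^d be a closed Euclidean ball of positive radius. Then the map r ↦ (V_r(D_1 ∪ D_2) − V_r(D_1)) / V_r(D_2) is monotonically decreasing on (0,∞). -/
import Mathlib


open MeasureTheory
open scoped Classical

noncomputable section

/-- `V_r(D)`: the Lebesgue volume of the set of points `x` such that the closed ball
of radius `r` around `x` (i.e. `x + B̄_r(0)`) intersects `D`. -/
def Vr {d : ℕ} (r : ℝ) (D : Set (EuclideanSpace ℝ (Fin d))) : ℝ :=
  (volume {x : EuclideanSpace ℝ (Fin d) | (Metric.closedBall x r ∩ D).Nonempty}).toReal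

section Aux

open Metric Set
open scoped Pointwise

variable {d : ℕ}

/-- For compact `D`, the set of centers whose `r`-ball meets `D` is the `r`-cthickening. -/
lemma Vr_set_eq {r : ℝ} (hr : 0 ≤ r) {D : Set (EuclideanSpace ℝ (Fin d))} (hD : IsCompact D) :
    {x : EuclideanSpace ℝ (Fin d) | (Metric.closedBall x r ∩ D).Nonempty}
      = Metric.cthickening r D := by
  rw [hD.cthickening_eq_biUnion_closedBall hr]
  ext x
  simp only [Set.mem_setOf_eq, Set.mem_iUnion, Metric.mem_closedBall, Set.Nonempty,
    Set.mem_inter_iff]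
  constructor
  · rintro ⟨y, hy1, hy2⟩
    exact ⟨y, hy2, by rwa [dist_comm]⟩
  · rintro ⟨y, hy1, hy2⟩
    exact ⟨y, by rwa [dist_comm], hy1⟩

end Aux

/-- **Lemma 4.4.** If `D₁ ⊆ ℝ^d` is a finite union of bounded convex regular-closed
sets and `D₂` is a closed Euclidean ball of positive radius, then
`r ↦ (V_r(D₁ ∪ D₂) − V_r(D₁)) / V_r(D₂)` is monotonically decreasing on `(0,∞)`. -/
theorem statement18 (d : ℕ) (D₁ D₂ : Set (EuclideanSpace ℝ (Fin d)))
    (hD₁ : ∃ (m : ℕ) (A : Fin m → Set (EuclideanSpace ℝ (Fin d))),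
      D₁ = ⋃ i, A i ∧ ∀ i, Convex ℝ (A i) ∧ Bornology.IsBounded (A i) ∧
        closure (interior (A i)) = A i)
    (hD₂ : ∃ (c : EuclideanSpace ℝ (Fin d)) (ρ : ℝ), 0 < ρ ∧
      D₂ = Metric.closedBall c ρ) :
    AntitoneOn (fun r => (Vr r (D₁ ∪ D₂) - Vr r D₁) / Vr r D₂) (Set.Ioi (0 : ℝ)) := by
  classical
  open Metric Set in
  open scoped Pointwise in
  obtain ⟨c, ρ, hρ, rfl⟩ := hD₂
  have hK : IsCompact D₁ := by
    obtain ⟨m, A, rfl, hA⟩ := hD₁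
    exact isCompact_iUnion fun i => Metric.isCompact_of_isClosed_isBounded
      ((hA i).2.2 ▸ isClosed_closure) (hA i).2.1
  -- notation
  -- Volume helpers for each r > 0
  have hball_pos : ∀ r : ℝ, 0 < r →
      0 < (volume (closedBall c (r + ρ) )).toReal := by
    intro r hr
    refine ENNReal.toReal_pos (ne_of_gt ?_) (isCompact_closedBall c _).measure_lt_top.ne
    exact lt_of_lt_of_le (measure_ball_pos volume c (by positivity))
      (measure_mono ball_subset_closedBall)
  have hVrD₂ : ∀ r : ℝ, 0 < r →
      Vr r (closedBall c ρ) = (volume (closedBall c (r + ρ) )).toReal := by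
    intro r hr
    unfold Vr
    rw [Vr_set_eq hr.le (isCompact_closedBall c ρ), cthickening_closedBall hr.le hρ.le]
  have hVrD₁ : ∀ r : ℝ, 0 < r →
      Vr r D₁ = (volume (cthickening r D₁)).toReal := by
    intro r hr
    unfold Vr
    rw [Vr_set_eq hr.le hK]
  have hVrU : ∀ r : ℝ, 0 < r →
      Vr r (D₁ ∪ closedBall c ρ)
        = (volume (cthickening r D₁ ∪ closedBall c (r + ρ) )).toReal := by
    intro r hr
    unfold Vr
    rw [Vr_set_eq hr.le (hK.union (isCompact_closedBall c ρ)), cthickening_union,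
      cthickening_closedBall hr.le hρ.le]
  -- numerator equals volume of the ball minus the covered part
  have hnum : ∀ r : ℝ, 0 < r →
      Vr r (D₁ ∪ closedBall c ρ) - Vr r D₁
        = (volume (closedBall c (r + ρ) )).toReal
          - (volume (closedBall c (r + ρ) ∩ cthickening r D₁ )).toReal := by
    intro r hr
    rw [hVrU r hr, hVrD₁ r hr]
    set N := cthickening r D₁ with hN
    set B := closedBall c (r + ρ) with hB
    have hNmeas : MeasurableSet N := isClosed_cthickening.measurableSet
    have hNfin : volume N ≠ ⊤ := (hK.cthickening.measure_lt_top).ne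
    have hBfin : volume B ≠ ⊤ := (isCompact_closedBall c _).measure_lt_top.ne
    have hUnion : volume (N ∪ B) = volume N + volume (B \ N) := by
      rw [← Set.union_diff_self]
      exact measure_union disjoint_sdiff_right (measurableSet_closedBall.diff hNmeas)
    have hsplit : volume (B ∩ N) + volume (B \ N) = volume B :=
      measure_inter_add_diff B hNmeas
    have hBN_fin : volume (B \ N) ≠ ⊤ :=
      ((measure_mono diff_subset).trans_lt (isCompact_closedBall c _).measure_lt_top).ne
    have hBiN_fin : volume (B ∩ N) ≠ ⊤ :=
      ((measure_mono inter_subset_left).trans_lt (isCompact_closedBall c _).measure_lt_top).ne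
    have h1 : (volume (N ∪ B)).toReal = (volume N).toReal + (volume (B \ N)).toReal := by
      rw [hUnion, ENNReal.toReal_add hNfin hBN_fin]
    have h2 : (volume (B ∩ N)).toReal + (volume (B \ N)).toReal = (volume B).toReal := by
      rw [← ENNReal.toReal_add hBiN_fin hBN_fin, hsplit]
    linarith
  -- main monotonicity
  intro a ha b hb hab
  simp only [Set.mem_Ioi] at ha hb
  simp only
  rw [hnum a ha, hnum b hb, hVrD₂ a ha, hVrD₂ b hb]
  set lam : ℝ := (b + ρ) / (a + ρ) with hlam
  have haρ : (0:ℝ) < a + ρ := by positivity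
  have hbρ : (0:ℝ) < b + ρ := by positivity
  have hlam_pos : 0 < lam := div_pos hbρ haρ
  have hlam_one : 1 ≤ lam := (one_le_div haρ).2 (by linarith)
  have hlam_mul : lam * (a + ρ) = b + ρ := div_mul_cancel₀ _ haρ.ne'
  set Na := cthickening a D₁ with hNa
  set Nb := cthickening b D₁ with hNb
  set Ba := closedBall c (a + ρ) with hBa
  set Bb := closedBall c (b + ρ) with hBb
  -- geometric inclusion under scaling about c
  have hincl : (fun x : EuclideanSpace ℝ (Fin d) => (c - lam • c) + lam • x) '' (Ba ∩ Na) ⊆ Bb ∩ Nb := by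
    rintro _ ⟨x, ⟨hxB, hxN⟩, rfl⟩
    have hx_eq : ∀ z, (c - lam • c) + lam • x - z = lam • (x - c) + (c - z) := by
      intro z; module
    have hdistc : dist ((c - lam • c) + lam • x) c ≤ b + ρ := by
      rw [dist_eq_norm]
      have : (c - lam • c) + lam • x - c = lam • (x - c) := by module
      rw [this, norm_smul, Real.norm_eq_abs, abs_of_pos hlam_pos]
      have hxc : ‖x - c‖ ≤ a + ρ := by
        rw [← dist_eq_norm]; exact mem_closedBall.1 hxB
      calc lam * ‖x - c‖ ≤ lam * (a + ρ) := by nlinarith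
        _ = b + ρ := hlam_mul
    refine ⟨mem_closedBall.2 hdistc, ?_⟩
    -- find a point of D₁ near x
    have hxN' : x ∈ ⋃ y ∈ D₁, closedBall y a := by
      rwa [← hK.cthickening_eq_biUnion_closedBall ha.le]
    obtain ⟨y, hyD, hxy⟩ := Set.mem_iUnion₂.1 hxN'
    have hxy' : dist x y ≤ a := mem_closedBall.1 hxy
    have hstep : dist ((c - lam • c) + lam • x) x ≤ b - a := by
      rw [dist_eq_norm]
      have : (c - lam • c) + lam • x - x = (lam - 1) • (x - c) := by module
      rw [this, norm_smul, Real.norm_eq_abs, abs_of_nonneg (by linarith)]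
      have hxc : ‖x - c‖ ≤ a + ρ := by
        rw [← dist_eq_norm]; exact mem_closedBall.1 hxB
      nlinarith
    have : dist ((c - lam • c) + lam • x) y ≤ b :=
      (dist_triangle _ x y).trans (by linarith)
    rw [hNb, hK.cthickening_eq_biUnion_closedBall hb.le]
    exact Set.mem_iUnion₂.2 ⟨y, hyD, mem_closedBall.2 this⟩
  -- volume consequences
  have hNa_meas : MeasurableSet Na := isClosed_cthickening.measurableSet
  have hNb_meas : MeasurableSet Nb := isClosed_cthickening.measurableSet
  have himg : volume ((fun x : EuclideanSpace ℝ (Fin d) => (c - lam • c) + lam • x) '' (Ba ∩ Na))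
      = ENNReal.ofReal (lam ^ d) * volume (Ba ∩ Na) := by
    have : (fun x : EuclideanSpace ℝ (Fin d) => (c - lam • c) + lam • x) '' (Ba ∩ Na)
        = (c - lam • c) +ᵥ (lam • (Ba ∩ Na)) := by
      rw [← Set.image_smul, ← Set.image_vadd, Set.image_image]
      rfl
    rw [this, measure_vadd, Measure.addHaar_smul, finrank_euclideanSpace_fin,
      abs_of_pos (pow_pos hlam_pos d)]
  have hkey : ENNReal.ofReal (lam ^ d) * volume (Ba ∩ Na) ≤ volume (Bb ∩ Nb) := by
    rw [← himg]; exact measure_mono hincl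
  -- pass to reals
  have hBaNa_fin : volume (Ba ∩ Na) ≠ ⊤ :=
    ((measure_mono Set.inter_subset_left).trans_lt (isCompact_closedBall c _).measure_lt_top).ne
  have hBbNb_fin : volume (Bb ∩ Nb) ≠ ⊤ :=
    ((measure_mono Set.inter_subset_left).trans_lt (isCompact_closedBall c _).measure_lt_top).ne
  have hkeyR : lam ^ d * (volume (Ba ∩ Na)).toReal ≤ (volume (Bb ∩ Nb)).toReal := by
    have := ENNReal.toReal_mono hBbNb_fin hkey
    rwa [ENNReal.toReal_mul, ENNReal.toReal_ofReal (by positivity)] at this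
  -- ball volumes scale by lam ^ d
  have hBb_vol : (volume Bb).toReal = lam ^ d * (volume Ba).toReal := by
    rw [hBa, hBb, Measure.addHaar_closedBall volume c haρ.le,
      Measure.addHaar_closedBall volume c hbρ.le, finrank_euclideanSpace_fin,
      ENNReal.toReal_mul, ENNReal.toReal_mul, ENNReal.toReal_ofReal (by positivity),
      ENNReal.toReal_ofReal (by positivity), ← mul_assoc]
    congr 1
    rw [← hlam_mul, mul_pow]
  have hBa_pos : 0 < (volume Ba).toReal := hball_pos a ha
  have hBb_pos : 0 < (volume Bb).toReal := hball_pos b hb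
  -- also the covered parts are at most the ball and nonnegative
  have hna_nonneg : 0 ≤ (volume (Ba ∩ Na)).toReal := ENNReal.toReal_nonneg
  -- final algebra
  rw [div_le_div_iff₀ hBb_pos hBa_pos]
  have hLpos : 0 < lam ^ d := pow_pos hlam_pos d
  nlinarith [hkeyR, hBb_vol, hBa_pos, hLpos, hna_nonneg]

end
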